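/- If there exists a diff from β_S to β_T under the family F(≤≥,←), then there exists a best diff F = (f_1,…,f_m) under F(≤≥,←) that contains no pair of operations f_i = (A ≤ a_i, B ← b_i) and f_j = (A ≥ a_j, B ← b_j) with a_i ≥ a_j; that is, no two operations of F with opposite condition directions have overlapping matched key sets. -/

import Mathlib

open scoped Classical

/-- An operation of the family `F(≤≥,←)`: if `dir = true` the condition is `A ≤ a`,
otherwise the condition is `A ≥ a`; the modifier assigns `B ← b` to matched keys. -/
structure OpIneqAsg where
  dir : Bool
  a : ℝ
  b : ℝ

/-- The condition of an operation, evaluated on an `A`-value `v`. -/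
def OpIneqAsg.cond (f : OpIneqAsg) (v : ℤ) : Prop :=
  if f.dir then (v : ℝ) ≤ f.a else f.a ≤ (v : ℝ)

/-- Applying an operation: every key whose `A`-value satisfies the condition gets
its `B`-value replaced by `b`; other keys are unchanged. -/
noncomputable def OpIneqAsg.apply {K : Type*} (α : K → ℤ) (f : OpIneqAsg) (β : K → ℝ) :
    K → ℝ :=
  fun k => if f.cond (α k) then f.b else β k

/-- Successive application of a finite sequence of operations. -/
noncomputable def applyOpsIneqAsg {K : Type*} (α : K → ℤ) (L : List OpIneqAsg) (β : K → ℝ) :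
    K → ℝ :=
  L.foldl (fun β' f => f.apply α β') β

/-- `L` is a diff from `βS` to `βT` under `F(≤≥,←)`. -/
def IsDiffIneqAsg {K : Type*} (α : K → ℤ) (L : List OpIneqAsg) (βS βT : K → ℝ) : Prop :=
  applyOpsIneqAsg α L βS = βT

/-- `L` is a best diff: a diff of minimum cost (the cost being the number of operations). -/
def IsBestDiffIneqAsg {K : Type*} (α : K → ℤ) (L : List OpIneqAsg) (βS βT : K → ℝ) : Prop :=
  IsDiffIneqAsg α L βS βT ∧
    ∀ L' : List OpIneqAsg, IsDiffIneqAsg α L' βS βT → L.length ≤ L'.length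

noncomputable def stepAt (v : ℤ) : ℝ → OpIneqAsg → ℝ := fun x f => if f.cond v then f.b else x

lemma applyOps_eq {K : Type*} (α : K → ℤ) (L : List OpIneqAsg) (β : K → ℝ) (k : K) :
    applyOpsIneqAsg α L β k = L.foldl (stepAt (α k)) (β k) := by
  induction L generalizing β with
  | nil => rfl
  | cons f T ih =>
    show applyOpsIneqAsg α T (f.apply α β) k = _
    rw [ih]
    rfl

lemma foldl_absorb (v : ℤ) (x y : ℝ) (B C : List OpIneqAsg) (g : OpIneqAsg) (hg : g.cond v) :
    (B ++ g :: C).foldl (stepAt v) x = (B ++ g :: C).foldl (stepAt v) y := by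
  have hstep : ∀ z, stepAt v z g = g.b := fun z => if_pos hg
  simp only [List.foldl_append, List.foldl_cons, hstep]

lemma list_exists_min (r : OpIneqAsg → ℝ) (P : OpIneqAsg → Prop) (T : List OpIneqAsg)
    (h : ∃ g ∈ T, P g) : ∃ g₀ ∈ T, P g₀ ∧ ∀ g ∈ T, P g → r g₀ ≤ r g := by
  classical
  obtain ⟨g, hgT, hPg⟩ := h
  have hne : (T.toFinset.filter P).Nonempty :=
    ⟨g, by simp [List.mem_toFinset, hgT, hPg]⟩
  obtain ⟨g₀, hg₀, hmin⟩ := Finset.exists_min_image (T.toFinset.filter P) r hne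
  simp only [Finset.mem_filter, List.mem_toFinset] at hg₀
  refine ⟨g₀, hg₀.1, hg₀.2, fun g' hg'T hPg' => hmin g' ?_⟩
  simp [Finset.mem_filter, List.mem_toFinset, hg'T, hPg']

lemma exists_normal (L : List OpIneqAsg) :
    ∃ L' : List OpIneqAsg, L'.length = L.length ∧
      (∀ (v : ℤ) (x : ℝ), L'.foldl (stepAt v) x = L.foldl (stepAt v) x) ∧
      (∀ f ∈ L', ∀ g ∈ L', f.dir = true → g.dir = false → f.a < g.a) := by
  induction L with
  | nil => exact ⟨[], rfl, fun v x => rfl, by simp⟩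
  | cons f T ih =>
    obtain ⟨T', hlen, hsem, hnov⟩ := ih
    by_cases hd : f.dir = true
    · by_cases hV : ∃ g ∈ T', g.dir = false ∧ g.a ≤ f.a
      · obtain ⟨g₀, hg₀T, ⟨hg₀d, hg₀a⟩, hmin⟩ :=
          list_exists_min OpIneqAsg.a (fun g => g.dir = false ∧ g.a ≤ f.a) T' hV
        set f' : OpIneqAsg := ⟨true, (⌈g₀.a⌉ : ℝ) - 1, f.b⟩ with hf'
        have hf'a : f'.a < g₀.a := by
          have := Int.ceil_lt_add_one g₀.a
          simp only [hf']
          linarith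
        refine ⟨f' :: T', by simpa using hlen, ?_, ?_⟩
        · intro v x
          simp only [List.foldl_cons]
          rw [← hsem]
          by_cases h1 : f.cond v
          · by_cases h2 : f'.cond v
            · have : stepAt v x f' = stepAt v x f := by
                simp only [stepAt]; rw [if_pos h1, if_pos h2]
              rw [this]
            · -- the removed key matches g₀, later in the list
              have hv : g₀.a ≤ (v : ℝ) := by
                have h2' : ¬ ((v : ℝ) ≤ (⌈g₀.a⌉ : ℝ) - 1) := by
                  simpa [OpIneqAsg.cond, hf'] using h2
                push_neg at h2'
                have : (⌈g₀.a⌉ : ℝ) < (v : ℝ) + 1 := by linarith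
                have hle : ⌈g₀.a⌉ ≤ v := by exact_mod_cast Int.lt_add_one_iff.mp (by exact_mod_cast this)
                calc g₀.a ≤ (⌈g₀.a⌉ : ℝ) := Int.le_ceil _
                  _ ≤ (v : ℝ) := by exact_mod_cast hle
              have hg₀c : g₀.cond v := by simp [OpIneqAsg.cond, hg₀d, hv]
              obtain ⟨B, C, hBC⟩ := List.append_of_mem hg₀T
              rw [hBC]
              exact foldl_absorb v _ _ B C g₀ hg₀c
          · have h2 : ¬ f'.cond v := by
              intro h2
              apply h1
              have : (v : ℝ) ≤ (⌈g₀.a⌉ : ℝ) - 1 := by simpa [OpIneqAsg.cond, hf'] using h2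
              have : (v : ℝ) ≤ f.a := by
                have := hf'a
                simp only [hf'] at this
                linarith [hg₀a]
              simp [OpIneqAsg.cond, hd, this]
            have : stepAt v x f' = stepAt v x f := by
              simp [stepAt, if_neg h1, if_neg h2]
            rw [this]
        · intro p hp q hq hpd hqd
          rcases List.mem_cons.mp hp with hp | hp <;> rcases List.mem_cons.mp hq with hq | hq
          · rw [hq] at hqd; simp [hf'] at hqd
          · rw [hp]
            by_cases hqv : q.a ≤ f.a
            · have := hmin q hq ⟨hqd, hqv⟩
              linarith [hf'a]
            · push_neg at hqv
              linarith [hf'a, hg₀a]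
          · rw [hq] at hqd; simp [hf'] at hqd
          · exact hnov p hp q hq hpd hqd
      · refine ⟨f :: T', by simpa using hlen, ?_, ?_⟩
        · intro v x
          simp only [List.foldl_cons]
          rw [hsem]
        · intro p hp q hq hpd hqd
          rcases List.mem_cons.mp hp with hp | hp <;> rcases List.mem_cons.mp hq with hq | hq
          · rw [hq] at hqd; rw [hd] at hqd; simp at hqd
          · rw [hp]
            by_contra hlt
            push_neg at hlt
            exact hV ⟨q, hq, hqd, hlt⟩
          · rw [hq] at hqd; rw [hd] at hqd; simp at hqd
          · exact hnov p hp q hq hpd hqd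
    · have hdf : f.dir = false := by simpa using hd
      by_cases hV : ∃ g ∈ T', g.dir = true ∧ f.a ≤ g.a
      · obtain ⟨g₀, hg₀T, ⟨hg₀d, hg₀a⟩, hmax⟩ :=
          list_exists_min (fun g => -g.a) (fun g => g.dir = true ∧ f.a ≤ g.a) T' hV
        have hmax' : ∀ g ∈ T', g.dir = true → f.a ≤ g.a → g.a ≤ g₀.a := by
          intro g hg h1 h2
          have := hmax g hg ⟨h1, h2⟩
          linarith
        set f' : OpIneqAsg := ⟨false, (⌊g₀.a⌋ : ℝ) + 1, f.b⟩ with hf'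
        have hf'a : g₀.a < f'.a := by
          have := Int.lt_floor_add_one g₀.a
          simp only [hf']
          linarith
        refine ⟨f' :: T', by simpa using hlen, ?_, ?_⟩
        · intro v x
          simp only [List.foldl_cons]
          rw [← hsem]
          by_cases h1 : f.cond v
          · by_cases h2 : f'.cond v
            · have : stepAt v x f' = stepAt v x f := by
                simp only [stepAt]; rw [if_pos h1, if_pos h2]
              rw [this]
            · have hv : (v : ℝ) ≤ g₀.a := by
                have h2' : ¬ ((⌊g₀.a⌋ : ℝ) + 1 ≤ (v : ℝ)) := by
                  simpa [OpIneqAsg.cond, hf'] using h2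
                push_neg at h2'
                have hle : v ≤ ⌊g₀.a⌋ := by
                  exact_mod_cast Int.lt_add_one_iff.mp (by exact_mod_cast h2')
                calc (v : ℝ) ≤ (⌊g₀.a⌋ : ℝ) := by exact_mod_cast hle
                  _ ≤ g₀.a := Int.floor_le _
              have hg₀c : g₀.cond v := by simp [OpIneqAsg.cond, hg₀d, hv]
              obtain ⟨B, C, hBC⟩ := List.append_of_mem hg₀T
              rw [hBC]
              exact foldl_absorb v _ _ B C g₀ hg₀c
          · have h2 : ¬ f'.cond v := by
              intro h2
              apply h1
              have : (⌊g₀.a⌋ : ℝ) + 1 ≤ (v : ℝ) := by simpa [OpIneqAsg.cond, hf'] using h2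
              have : f.a ≤ (v : ℝ) := by
                have := hf'a
                simp only [hf'] at this
                linarith [hg₀a]
              simp [OpIneqAsg.cond, hdf, this]
            have : stepAt v x f' = stepAt v x f := by
              simp [stepAt, if_neg h1, if_neg h2]
            rw [this]
        · intro p hp q hq hpd hqd
          rcases List.mem_cons.mp hp with hp | hp <;> rcases List.mem_cons.mp hq with hq | hq
          · rw [hp] at hpd; simp [hf'] at hpd
          · rw [hp] at hpd; simp [hf'] at hpd
          · rw [hq]
            by_cases hpv : f.a ≤ p.a
            · have := hmax' p hp hpd hpv
              linarith [hf'a]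
            · push_neg at hpv
              linarith [hf'a, hg₀a]
          · exact hnov p hp q hq hpd hqd
      · refine ⟨f :: T', by simpa using hlen, ?_, ?_⟩
        · intro v x
          simp only [List.foldl_cons]
          rw [hsem]
        · intro p hp q hq hpd hqd
          rcases List.mem_cons.mp hp with hp | hp <;> rcases List.mem_cons.mp hq with hq | hq
          · rw [hp] at hpd; rw [hdf] at hpd; simp at hpd
          · rw [hp] at hpd; rw [hdf] at hpd; simp at hpd
          · rw [hq]
            by_contra hlt
            push_neg at hlt
            exact hV ⟨p, hp, hpd, hlt⟩
          · exact hnov p hp q hq hpd hqd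

/-- If there exists a diff from `βS` to `βT` under `F(≤≥,←)`, then there exists a best diff
containing no pair of operations `(A ≤ a_i, B ← b_i)` and `(A ≥ a_j, B ← b_j)` with
`a_i ≥ a_j`. -/
theorem exists_best_diff_no_overlap {K : Type*} [Fintype K] (α : K → ℤ) (βS βT : K → ℤ)
    (h : ∃ L : List OpIneqAsg,
      IsDiffIneqAsg α L (fun k => (βS k : ℝ)) (fun k => (βT k : ℝ))) :
    ∃ L : List OpIneqAsg,
      IsBestDiffIneqAsg α L (fun k => (βS k : ℝ)) (fun k => (βT k : ℝ)) ∧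
      ∀ f ∈ L, ∀ g ∈ L, f.dir = true → g.dir = false → f.a < g.a := by
  classical
  set βS' : K → ℝ := fun k => (βS k : ℝ)
  set βT' : K → ℝ := fun k => (βT k : ℝ)
  have hP : ∃ n : ℕ, ∃ L : List OpIneqAsg, IsDiffIneqAsg α L βS' βT' ∧ L.length = n := by
    obtain ⟨L, hL⟩ := h
    exact ⟨L.length, L, hL, rfl⟩
  obtain ⟨L, hLdiff, hLlen⟩ := Nat.find_spec hP
  have hmin : ∀ L' : List OpIneqAsg, IsDiffIneqAsg α L' βS' βT' → Nat.find hP ≤ L'.length :=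
    fun L' hL' => Nat.find_le ⟨L', hL', rfl⟩
  obtain ⟨L', hlen, hsem, hnov⟩ := exists_normal L
  refine ⟨L', ⟨?_, ?_⟩, hnov⟩
  · funext k
    rw [applyOps_eq, hsem, ← applyOps_eq, hLdiff]
  · intro L'' hL''
    calc L'.length = Nat.find hP := hlen.trans hLlen
      _ ≤ L''.length := hmin L'' hL''
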